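/- For every (r, b) ∈ M̄ and every even kernel K_1 ∈ L^1, both components of F(r,b) have zero mean: ∫_{T^N} [(1−ρ) K_1*(D_r(r,b) r) − D_r(r,b) r K_1*(1−ρ)] dx = 0 and ∫_{T^N} [(1−ρ) K_1*(D_b(r,b) b) − D_b(r,b) b K_1*(1−ρ)] dx = 0; consequently the integro-differential system conserves the total masses ∫ r dx and ∫ b dx. -/

import Mathlib

open MeasureTheory Filter Set
open scoped ENNReal Topology

noncomputable section

/-! Functions on the torus `T^N` are modelled as `ℤ^N`-periodic functions on `ℝ^N`;
convolution with a kernel `K₁ : ℝ^N → ℝ` over all of `ℝ^N` is then exactly convolution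
against the periodization of `K₁` on the torus. -/

/-- `u : ℝ^N → ℝ` represents a function on the torus `T^N`: it is `ℤ^N`-periodic. -/
def IsPeriodic {N : ℕ} (u : (Fin N → ℝ) → ℝ) : Prop :=
  ∀ (x : Fin N → ℝ) (m : Fin N → ℤ), u (x + fun i => (m i : ℝ)) = u x

/-- The set `M̄` of pairs of (torus) densities `(r, b)` with `0 ≤ r`, `0 ≤ b`,
`r + b ≤ 1` a.e. (membership in `L²(T^N)` follows from measurability and boundedness). -/
def MBar (N : ℕ) : Set (((Fin N → ℝ) → ℝ) × ((Fin N → ℝ) → ℝ)) :=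
  {p | Measurable p.1 ∧ Measurable p.2 ∧ IsPeriodic p.1 ∧ IsPeriodic p.2 ∧
    (∀ᵐ x ∂volume, 0 ≤ p.1 x) ∧ (∀ᵐ x ∂volume, 0 ≤ p.2 x) ∧
    ∀ᵐ x ∂volume, p.1 x + p.2 x ≤ 1}

/-- The diffusivity `D_r(p,q) = C_r e^{-C_rr p + C_rb q}`. -/
def Dr (C_r C_rr C_rb p q : ℝ) : ℝ := C_r * Real.exp (-C_rr * p + C_rb * q)

/-- The diffusivity `D_b(p,q) = C_b e^{C_br p - C_bb q}`. -/
def Db (C_b C_br C_bb p q : ℝ) : ℝ := C_b * Real.exp (C_br * p - C_bb * q)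

/-- Convolution `(K * u)(x) = ∫_{ℝ^N} K(x - y) u(y) dy`; for `ℤ^N`-periodic `u` this is
convolution on the torus against the periodization of `K`. -/
def conv {N : ℕ} (K u : (Fin N → ℝ) → ℝ) (x : Fin N → ℝ) : ℝ :=
  ∫ y, K (x - y) * u y

/-- First component of the vector field:
`F_r(r,b) = (1-ρ) K₁*(D_r(r,b) r) - D_r(r,b) r K₁*(1-ρ)`, `ρ = r + b`. -/
def Fr {N : ℕ} (K₁ : (Fin N → ℝ) → ℝ) (C_r C_rr C_rb : ℝ)
    (r b : (Fin N → ℝ) → ℝ) (x : Fin N → ℝ) : ℝ :=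
  (1 - (r x + b x)) * conv K₁ (fun y => Dr C_r C_rr C_rb (r y) (b y) * r y) x
    - Dr C_r C_rr C_rb (r x) (b x) * r x * conv K₁ (fun y => 1 - (r y + b y)) x

/-- Second component of the vector field:
`F_b(r,b) = (1-ρ) K₁*(D_b(r,b) b) - D_b(r,b) b K₁*(1-ρ)`, `ρ = r + b`. -/
def Fb {N : ℕ} (K₁ : (Fin N → ℝ) → ℝ) (C_b C_br C_bb : ℝ)
    (r b : (Fin N → ℝ) → ℝ) (x : Fin N → ℝ) : ℝ :=
  (1 - (r x + b x)) * conv K₁ (fun y => Db C_b C_br C_bb (r y) (b y) * b y) x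
    - Db C_b C_br C_bb (r x) (b x) * b x * conv K₁ (fun y => 1 - (r y + b y)) x

/-- The unit cell `[0,1)^N` of the torus `T^N`, over which torus integrals are taken. -/
def unitBox (N : ℕ) : Set (Fin N → ℝ) := Set.univ.pi fun _ => Set.Ico (0 : ℝ) 1

/-! ### Auxiliary lemmas -/

open scoped Pointwise

section Aux

variable {N : ℕ}

lemma unitBox_measurableSet (N : ℕ) : MeasurableSet (unitBox N) :=
  MeasurableSet.pi Set.countable_univ fun _ _ => measurableSet_Ico

lemma volume_unitBox (N : ℕ) : volume (unitBox N) = 1 := by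
  simp [unitBox, volume_pi_pi, Real.volume_Ico]

instance : IsFiniteMeasure (volume.restrict (unitBox N)) :=
  ⟨by rw [Measure.restrict_apply_univ, volume_unitBox]; norm_num⟩

lemma unitBox_eq_fd (N : ℕ) :
    ZSpan.fundamentalDomain (Pi.basisFun ℝ (Fin N)) = unitBox N := by
  ext x
  simp [ZSpan.fundamentalDomain, unitBox, Pi.basisFun_repr, Set.mem_pi]

lemma mem_span_basisFun {v : Fin N → ℝ}
    (hv : v ∈ Submodule.span ℤ (Set.range (Pi.basisFun ℝ (Fin N)))) :
    ∃ m : Fin N → ℤ, v = fun i => (m i : ℝ) := by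
  induction hv using Submodule.span_induction with
  | mem x hx =>
      obtain ⟨i, rfl⟩ := hx
      exact ⟨fun j => if i = j then 1 else 0, by
        ext j; simp [Pi.basisFun_apply, Pi.single_apply, eq_comm]⟩
  | zero => exact ⟨0, by ext j; simp⟩
  | add x y _ _ hx hy =>
      obtain ⟨m, rfl⟩ := hx; obtain ⟨n, rfl⟩ := hy
      exact ⟨m + n, by ext j; simp⟩
  | smul c x _ hx =>
      obtain ⟨m, rfl⟩ := hx
      exact ⟨c • m, by ext j; simp⟩

lemma setIntegral_vadd_unitBox {H : (Fin N → ℝ) → ℝ} (hH : IsPeriodic H)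
    (v : Fin N → ℝ) :
    ∫ x in (v +ᵥ unitBox N), H x = ∫ x in unitBox N, H x := by
  classical
  set b := Pi.basisFun ℝ (Fin N)
  have hfd : IsAddFundamentalDomain
      (Submodule.span ℤ (Set.range b)).toAddSubgroup (unitBox N) volume := by
    rw [← unitBox_eq_fd]
    exact ZSpan.isAddFundamentalDomain' b volume
  have hfd2 : IsAddFundamentalDomain
      (Submodule.span ℤ (Set.range b)).toAddSubgroup (v +ᵥ unitBox N) volume :=
    hfd.vadd_of_comm v
  haveI : Countable (Submodule.span ℤ (Set.range b)).toAddSubgroup := by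
    refine Function.Injective.countable
      (f := fun l : (Submodule.span ℤ (Set.range b)).toAddSubgroup =>
        (fun i => ⌊(l : Fin N → ℝ) i⌋ : Fin N → ℤ)) ?_
    rintro ⟨x, hx⟩ ⟨y, hy⟩ h
    obtain ⟨mx, rfl⟩ := mem_span_basisFun hx
    obtain ⟨my, rfl⟩ := mem_span_basisFun hy
    simp only [Subtype.mk.injEq]
    have : ∀ i, ⌊(mx i : ℝ)⌋ = ⌊(my i : ℝ)⌋ := fun i => congrFun h i
    ext i
    have := this i
    simpa [Int.floor_intCast] using this
  refine hfd2.setIntegral_eq hfd ?_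
  rintro ⟨g, hg⟩ x
  obtain ⟨m, rfl⟩ := mem_span_basisFun hg
  have := hH x m
  simpa [add_comm] using this

lemma conv_eq (K u : (Fin N → ℝ) → ℝ) (x : Fin N → ℝ) :
    conv K u x = ∫ z, K z * u (x - z) := by
  have := integral_sub_left_eq_self (μ := volume)
    (fun y => K (x - y) * u y) x
  rw [conv, ← this]
  congr 1 with z
  simp

lemma integral_abs_comp_sub (K : (Fin N → ℝ) → ℝ) (x : Fin N → ℝ) :
    ∫ y, |K (x - y)| = ∫ z, |K z| :=
  integral_sub_left_eq_self (fun y => |K y|) volume x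

lemma conv_abs_le {K u : (Fin N → ℝ) → ℝ} (hK : Integrable K volume) {C : ℝ}
    (_hC : 0 ≤ C) (hu : ∀ᵐ y ∂volume, |u y| ≤ C) (x : Fin N → ℝ) :
    |conv K u x| ≤ (∫ z, |K z|) * C := by
  have hKx : Integrable (fun y => |K (x - y)| * C) volume := by
    have : Integrable (fun y => K (x - y)) volume := hK.comp_sub_left x
    exact this.abs.mul_const C
  calc |conv K u x| ≤ ∫ y, |K (x - y)| * |u y| := by
        rw [conv]
        have := norm_integral_le_integral_norm (fun y => K (x - y) * u y) (μ := volume)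
        simpa [Real.norm_eq_abs, abs_mul] using this
    _ ≤ ∫ y, |K (x - y)| * C := by
        refine integral_mono_of_nonneg ?_ hKx ?_
        · exact Filter.Eventually.of_forall fun y => mul_nonneg (abs_nonneg _) (abs_nonneg _)
        · filter_upwards [hu] with y hy
          exact mul_le_mul_of_nonneg_left hy (abs_nonneg _)
    _ = (∫ z, |K z|) * C := by
        rw [integral_mul_const, integral_abs_comp_sub]

lemma conv_aesm {K u : (Fin N → ℝ) → ℝ} (hK : Integrable K volume)
    (hu : Measurable u) : AEStronglyMeasurable (conv K u) volume := by
  have h1 : AEStronglyMeasurable (Function.uncurry fun x y => K (x - y) * u y)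
      ((volume : Measure (Fin N → ℝ)).prod volume) := by
    have hsub : Measure.QuasiMeasurePreserving
        (fun p : (Fin N → ℝ) × (Fin N → ℝ) => (p.1 - p.2, p.2))
        ((volume : Measure (Fin N → ℝ)).prod volume)
        ((volume : Measure (Fin N → ℝ)).prod volume) :=
      (measurePreserving_sub_prod volume volume).quasiMeasurePreserving
    have hKfst : AEStronglyMeasurable (fun p : (Fin N → ℝ) × (Fin N → ℝ) => K p.1)
        ((volume : Measure (Fin N → ℝ)).prod volume) :=
      hK.aestronglyMeasurable.comp_quasiMeasurePreserving Measure.quasiMeasurePreserving_fst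
    have : AEStronglyMeasurable (fun p : (Fin N → ℝ) × (Fin N → ℝ) => K (p.1 - p.2))
        ((volume : Measure (Fin N → ℝ)).prod volume) := by
      have := hKfst.comp_quasiMeasurePreserving hsub
      exact this
    exact this.mul ((hu.comp measurable_snd).aestronglyMeasurable)
  exact h1.integral_prod_right'

/-- a.e.-bounded measurable functions are integrable on the unit box. -/
lemma integrableOn_box {u : (Fin N → ℝ) → ℝ} (hu : AEStronglyMeasurable u volume) {C : ℝ}
    (hb : ∀ᵐ x ∂volume, |u x| ≤ C) : IntegrableOn u (unitBox N) volume := by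
  refine Integrable.mono' (integrable_const C) hu.restrict ?_
  exact ae_restrict_of_ae <| hb.mono fun x hx => by simpa [Real.norm_eq_abs] using hx

/-- Key step: the double integral transform. -/
lemma box_mul_conv {K f g : (Fin N → ℝ) → ℝ} (hK : Integrable K volume)
    (hf : Measurable f) (hg : Measurable g)
    {Cf Cg : ℝ} (hCf : 0 ≤ Cf) (_hCg : 0 ≤ Cg)
    (hfb : ∀ᵐ x ∂volume, |f x| ≤ Cf) (hgb : ∀ᵐ x ∂volume, |g x| ≤ Cg) :
    ∫ x in unitBox N, f x * conv K g x
      = ∫ z, K z * ∫ x in unitBox N, f x * g (x - z) := by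
  have h1 : ∀ x : Fin N → ℝ, f x * conv K g x = ∫ z, K z * (f x * g (x - z)) := by
    intro x
    rw [conv_eq, ← integral_const_mul]
    congr 1 with z; ring
  calc ∫ x in unitBox N, f x * conv K g x
      = ∫ x in unitBox N, ∫ z, K z * (f x * g (x - z)) :=
        setIntegral_congr_fun (unitBox_measurableSet N) fun x _ => h1 x
    _ = ∫ z, ∫ x in unitBox N, K z * (f x * g (x - z)) := by
        apply integral_integral_swap
        have hac : (volume.restrict (unitBox N)).prod (volume : Measure (Fin N → ℝ))
            ≪ (volume : Measure (Fin N → ℝ)).prod volume :=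
          Measure.AbsolutelyContinuous.prod Measure.restrict_le_self.absolutelyContinuous
            Measure.AbsolutelyContinuous.rfl
        have haesm : AEStronglyMeasurable
            (fun p : (Fin N → ℝ) × (Fin N → ℝ) => K p.2 * (f p.1 * g (p.1 - p.2)))
            ((volume.restrict (unitBox N)).prod volume) := by
          have hKsnd : AEStronglyMeasurable (fun p : (Fin N → ℝ) × (Fin N → ℝ) => K p.2)
              ((volume.restrict (unitBox N)).prod volume) :=
            hK.aestronglyMeasurable.comp_quasiMeasurePreserving
              (Measure.quasiMeasurePreserving_snd.mono_left hac)
          refine hKsnd.mul ?_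
          exact ((hf.comp measurable_fst).mul
            (hg.comp (measurable_fst.sub measurable_snd))).aestronglyMeasurable
        have qmp_fst : Measure.QuasiMeasurePreserving
            (Prod.fst : (Fin N → ℝ) × (Fin N → ℝ) → (Fin N → ℝ))
            ((volume.restrict (unitBox N)).prod volume) volume :=
          Measure.quasiMeasurePreserving_fst.mono_right
            Measure.restrict_le_self.absolutelyContinuous
        have qmp_sub : Measure.QuasiMeasurePreserving
            (fun p : (Fin N → ℝ) × (Fin N → ℝ) => p.1 - p.2)
            ((volume.restrict (unitBox N)).prod volume) volume := by
          have h0 : Measure.QuasiMeasurePreserving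
              (fun p : (Fin N → ℝ) × (Fin N → ℝ) => p.1 - p.2)
              ((volume : Measure (Fin N → ℝ)).prod volume) volume := by
            have := (Measure.quasiMeasurePreserving_fst (μ := (volume : Measure (Fin N → ℝ)))
              (ν := (volume : Measure (Fin N → ℝ)))).comp
              (measurePreserving_sub_prod (volume : Measure (Fin N → ℝ))
                volume).quasiMeasurePreserving
            exact this
          exact h0.mono_left hac
        refine Integrable.mono' (g := fun p : (Fin N → ℝ) × (Fin N → ℝ) => (Cf * Cg) * |K p.2|)
          ?_ haesm ?_
        · have h2 : Integrable (fun z : Fin N → ℝ => (Cf * Cg) * |K z|) volume :=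
            hK.abs.const_mul _
          have := (integrable_const (1 : ℝ) (μ := volume.restrict (unitBox N))).mul_prod h2
          simpa using this
        · filter_upwards [qmp_fst.ae hfb, qmp_sub.ae hgb] with p h1 h2
          show ‖K p.2 * (f p.1 * g (p.1 - p.2))‖ ≤ Cf * Cg * |K p.2|
          have heq : ‖K p.2 * (f p.1 * g (p.1 - p.2))‖ = |K p.2| * (|f p.1| * |g (p.1 - p.2)|) := by
            simp [Real.norm_eq_abs, abs_mul]
          rw [heq]
          calc |K p.2| * (|f p.1| * |g (p.1 - p.2)|)
              ≤ |K p.2| * (Cf * Cg) := by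
                refine mul_le_mul_of_nonneg_left ?_ (abs_nonneg _)
                exact mul_le_mul h1 h2 (abs_nonneg _) hCf
            _ = Cf * Cg * |K p.2| := by ring
    _ = ∫ z, K z * ∫ x in unitBox N, f x * g (x - z) := by
        congr 1 with z
        rw [integral_const_mul]

lemma inner_shift {f g : (Fin N → ℝ) → ℝ} (hf : Measurable f) (hg : Measurable g)
    (hfp : IsPeriodic f) (hgp : IsPeriodic g) (z : Fin N → ℝ) :
    ∫ x in unitBox N, g x * f (x - z) = ∫ x in unitBox N, f x * g (x + z) := by
  set H : (Fin N → ℝ) → ℝ := fun u => f u * g (u + z) with hH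
  have hHmeas : Measurable H := hf.mul (hg.comp (measurable_id.add_const z))
  have hHper : IsPeriodic H := by
    intro x m
    have h1 : (x + fun i => (m i : ℝ)) + z = (x + z) + fun i => (m i : ℝ) := by
      rw [add_right_comm]
    simp only [hH, h1, hfp x m, hgp (x + z) m]
  have key : ∫ x in unitBox N, H (x - z) = ∫ x in unitBox N, H x := by
    have hmp : MeasurePreserving (fun x : Fin N → ℝ => x - z) volume volume :=
      measurePreserving_sub_right volume z
    have hmeasf : Measurable (fun x : Fin N → ℝ => x - z) := measurable_id.sub_const z
    have hpre : (fun x : Fin N → ℝ => x - z) ⁻¹' ((-z) +ᵥ unitBox N) = unitBox N := by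
      ext x
      simp only [Set.mem_preimage, Set.mem_vadd_set_iff_neg_vadd_mem]
      constructor
      · intro h; simpa [vadd_eq_add, neg_neg, add_sub_cancel, add_comm] using h
      · intro h; simpa [vadd_eq_add, neg_neg, add_sub_cancel, add_comm] using h
    have hbox : MeasurableSet ((-z) +ᵥ unitBox N) :=
      (unitBox_measurableSet N).const_vadd (-z)
    calc ∫ x in unitBox N, H (x - z)
        = ∫ y, H y ∂((volume.restrict (unitBox N)).map (fun x => x - z)) := by
          rw [integral_map hmeasf.aemeasurable hHmeas.aestronglyMeasurable]
      _ = ∫ y, H y ∂(volume.restrict ((-z) +ᵥ unitBox N)) := by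
          congr 1
          have := Measure.restrict_map (μ := (volume : Measure (Fin N → ℝ)))
            hmeasf hbox
          rw [hpre] at this
          rw [← this, hmp.map_eq]
      _ = ∫ x in unitBox N, H x := setIntegral_vadd_unitBox hHper (-z)
  calc ∫ x in unitBox N, g x * f (x - z)
      = ∫ x in unitBox N, H (x - z) := by
        refine setIntegral_congr_fun (unitBox_measurableSet N) fun x _ => ?_
        simp only [hH, sub_add_cancel]
        ring
    _ = ∫ x in unitBox N, H x := key
    _ = ∫ x in unitBox N, f x * g (x + z) := rfl

lemma zero_mean {K : (Fin N → ℝ) → ℝ} (hK : Integrable K volume)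
    (hKe : ∀ x, K (-x) = K x)
    {f g : (Fin N → ℝ) → ℝ} (hf : Measurable f) (hg : Measurable g)
    (hfp : IsPeriodic f) (hgp : IsPeriodic g)
    {Cf Cg : ℝ} (hCf : 0 ≤ Cf) (hCg : 0 ≤ Cg)
    (hfb : ∀ᵐ x ∂volume, |f x| ≤ Cf) (hgb : ∀ᵐ x ∂volume, |g x| ≤ Cg) :
    ∫ x in unitBox N, (f x * conv K g x - g x * conv K f x) = 0 := by
  have hfint : IntegrableOn (fun x => f x * conv K g x) (unitBox N) volume := by
    refine integrableOn_box (hf.aestronglyMeasurable.mul (conv_aesm hK hg))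
      (C := Cf * ((∫ z, |K z|) * Cg)) ?_
    filter_upwards [hfb] with x hx
    rw [abs_mul]
    exact mul_le_mul hx (conv_abs_le hK hCg hgb x) (abs_nonneg _) hCf
  have hgint : IntegrableOn (fun x => g x * conv K f x) (unitBox N) volume := by
    refine integrableOn_box (hg.aestronglyMeasurable.mul (conv_aesm hK hf))
      (C := Cg * ((∫ z, |K z|) * Cf)) ?_
    filter_upwards [hgb] with x hx
    rw [abs_mul]
    exact mul_le_mul hx (conv_abs_le hK hCf hfb x) (abs_nonneg _) hCg
  rw [integral_sub hfint hgint]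
  have h1 : ∫ x in unitBox N, f x * conv K g x
      = ∫ z, K z * ∫ x in unitBox N, f x * g (x - z) :=
    box_mul_conv hK hf hg hCf hCg hfb hgb
  have h2 : ∫ x in unitBox N, g x * conv K f x
      = ∫ z, K z * ∫ x in unitBox N, f x * g (x - z) := by
    rw [box_mul_conv hK hg hf hCg hCf hgb hfb]
    have h3 : ∀ z : Fin N → ℝ, (∫ x in unitBox N, g x * f (x - z))
        = ∫ x in unitBox N, f x * g (x - (-z)) := by
      intro z
      rw [inner_shift hf hg hfp hgp z]
      congr 1 with x
      rw [sub_neg_eq_add]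
    calc ∫ z, K z * ∫ x in unitBox N, g x * f (x - z)
        = ∫ z, K z * ∫ x in unitBox N, f x * g (x - (-z)) := by
          congr 1 with z; rw [h3 z]
      _ = ∫ z, K (-z) * ∫ x in unitBox N, f x * g (x - z) := by
          have := integral_neg_eq_self
            (fun z : Fin N → ℝ => K (-z) * ∫ x in unitBox N, f x * g (x - z)) volume
          rw [← this]
          congr 1 with z
          rw [neg_neg]
      _ = ∫ z, K z * ∫ x in unitBox N, f x * g (x - z) := by
          congr 1 with z; rw [hKe z]
  rw [h1, h2, sub_self]

lemma good_set {r b : ℝ → (Fin N → ℝ) → ℝ} (hmem : ∀ t, (r t, b t) ∈ MBar N)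
    (hrc : ∀ x, Continuous fun t => r t x) (hbc : ∀ x, Continuous fun t => b t x) :
    ∀ᵐ x ∂(volume : Measure (Fin N → ℝ)),
      ∀ t : ℝ, 0 ≤ r t x ∧ 0 ≤ b t x ∧ r t x + b t x ≤ 1 := by
  have hru : Measurable (Function.uncurry r) :=
    measurable_uncurry_of_continuous_of_measurable hrc fun t => (hmem t).1
  have hbu : Measurable (Function.uncurry b) :=
    measurable_uncurry_of_continuous_of_measurable hbc fun t => (hmem t).2.1
  have m1 : Measurable fun p : ℝ × (Fin N → ℝ) => r p.1 p.2 := hru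
  have m2 : Measurable fun p : ℝ × (Fin N → ℝ) => b p.1 p.2 := hbu
  set A : Set (ℝ × (Fin N → ℝ)) :=
    {p | ¬(0 ≤ r p.1 p.2 ∧ 0 ≤ b p.1 p.2 ∧ r p.1 p.2 + b p.1 p.2 ≤ 1)} with hA
  have hAmeas : MeasurableSet A := by
    have h : MeasurableSet {p : ℝ × (Fin N → ℝ) |
        0 ≤ r p.1 p.2 ∧ 0 ≤ b p.1 p.2 ∧ r p.1 p.2 + b p.1 p.2 ≤ 1} := by
      refine MeasurableSet.inter ?_ (MeasurableSet.inter ?_ ?_)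
      · exact measurableSet_le measurable_const m1
      · exact measurableSet_le measurable_const m2
      · exact measurableSet_le (m1.add m2) measurable_const
    have heq : A = {p : ℝ × (Fin N → ℝ) |
        0 ≤ r p.1 p.2 ∧ 0 ≤ b p.1 p.2 ∧ r p.1 p.2 + b p.1 p.2 ≤ 1}ᶜ := by
      ext p; simp [hA]
    rw [heq]
    exact h.compl
  have hA0 : ((volume : Measure ℝ).prod (volume : Measure (Fin N → ℝ))) A = 0 := by
    rw [Measure.measure_prod_null hAmeas]
    refine Filter.Eventually.of_forall fun t => ?_
    obtain ⟨-, -, -, -, h1, h2, h3⟩ := hmem t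
    have hae : ∀ᵐ x ∂(volume : Measure (Fin N → ℝ)),
        0 ≤ r t x ∧ 0 ≤ b t x ∧ r t x + b t x ≤ 1 := by
      filter_upwards [h1, h2, h3] with x hx1 hx2 hx3
      exact ⟨hx1, hx2, hx3⟩
    exact ae_iff.mp hae
  set A' : Set ((Fin N → ℝ) × ℝ) := Prod.swap ⁻¹' A with hA'
  have hA'meas : MeasurableSet A' := hAmeas.preimage measurable_swap
  have hA'0 : ((volume : Measure (Fin N → ℝ)).prod (volume : Measure ℝ)) A' = 0 := by
    have := Measure.map_apply (μ := (volume : Measure (Fin N → ℝ)).prod volume)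
      measurable_swap hAmeas
    rw [Measure.prod_swap] at this
    calc ((volume : Measure (Fin N → ℝ)).prod (volume : Measure ℝ)) A'
        = ((volume : Measure ℝ).prod (volume : Measure (Fin N → ℝ))) A := this.symm ▸ rfl
      _ = 0 := hA0
  have hslice := (Measure.measure_prod_null hA'meas).mp hA'0
  filter_upwards [hslice] with x hx
  set C : Set ℝ := {t | 0 ≤ r t x ∧ 0 ≤ b t x ∧ r t x + b t x ≤ 1} with hC
  have hclosed : IsClosed C := by
    have hCeq : C = {t | 0 ≤ r t x} ∩ ({t | 0 ≤ b t x} ∩ {t | r t x + b t x ≤ 1}) := by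
      ext t; simp [hC, and_assoc]
    rw [hCeq]
    exact (isClosed_le continuous_const (hrc x)).inter
      ((isClosed_le continuous_const (hbc x)).inter
        (isClosed_le ((hrc x).add (hbc x)) continuous_const))
  have hdense : Dense C := by
    rw [dense_iff_inter_open]
    rintro U hU ⟨u, hu⟩
    by_contra hne
    push_neg at hne
    have hsub : U ⊆ Prod.mk x ⁻¹' A' := by
      intro t ht
      simp only [hA', Set.mem_preimage, Prod.swap_prod_mk, hA, Set.mem_setOf_eq]
      intro hcon
      exact Set.eq_empty_iff_forall_notMem.mp hne t ⟨ht, hcon⟩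
    have := measure_mono_null hsub hx
    exact absurd this (hU.measure_pos volume ⟨u, hu⟩).ne'
  intro t
  have hCu : C = Set.univ := hclosed.closure_eq ▸ hdense.closure_eq
  have ht : t ∈ C := hCu ▸ Set.mem_univ t
  exact ht

lemma weight_bound {c E w M : ℝ} (hc : 0 < c) (hE : E ≤ M) (hw0 : 0 ≤ w) (hw1 : w ≤ 1) :
    |c * Real.exp E * w| ≤ c * Real.exp M := by
  have he : Real.exp E ≤ Real.exp M := Real.exp_le_exp.2 hE
  have h0 : 0 ≤ c * Real.exp E * w :=
    mul_nonneg (mul_nonneg hc.le (Real.exp_pos E).le) hw0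
  rw [abs_of_nonneg h0]
  calc c * Real.exp E * w ≤ c * Real.exp E * 1 :=
        mul_le_mul_of_nonneg_left hw1 (mul_nonneg hc.le (Real.exp_pos E).le)
    _ = c * Real.exp E := mul_one _
    _ ≤ c * Real.exp M := mul_le_mul_of_nonneg_left he hc.le

end Aux

/-- **Conservation of mass.** For every `(r, b) ∈ M̄` and every even kernel `K₁ ∈ L¹`, both
components of `F(r,b)` have zero mean over the torus; consequently, along any solution of
the integro-differential system `d/dt (r,b) = F(r,b)` with values in `M̄`, the total masses
`∫ r dx` and `∫ b dx` are conserved. -/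
theorem F_zero_mean_and_mass_conservation (N : ℕ) (K₁ : (Fin N → ℝ) → ℝ)
    (hK : Integrable K₁ volume) (hKeven : ∀ x, K₁ (-x) = K₁ x)
    (C_r C_rr C_rb C_b C_br C_bb : ℝ)
    (hCr : 0 < C_r) (hCrr : 0 < C_rr) (hCrb : 0 < C_rb)
    (hCb : 0 < C_b) (hCbr : 0 < C_br) (hCbb : 0 < C_bb) :
    (∀ r b : (Fin N → ℝ) → ℝ, (r, b) ∈ MBar N →
      (∫ x in unitBox N, Fr K₁ C_r C_rr C_rb r b x) = 0 ∧
      (∫ x in unitBox N, Fb K₁ C_b C_br C_bb r b x) = 0) ∧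
    ∀ r b : ℝ → (Fin N → ℝ) → ℝ,
      (∀ t, (r t, b t) ∈ MBar N) →
      (∀ t x, HasDerivAt (fun s => r s x) (Fr K₁ C_r C_rr C_rb (r t) (b t) x) t) →
      (∀ t x, HasDerivAt (fun s => b s x) (Fb K₁ C_b C_br C_bb (r t) (b t) x) t) →
      ∀ t s : ℝ,
        (∫ x in unitBox N, r t x) = (∫ x in unitBox N, r s x) ∧
        (∫ x in unitBox N, b t x) = (∫ x in unitBox N, b s x) := by
  have hIK : (0:ℝ) ≤ ∫ z, |K₁ z| := integral_nonneg fun z => abs_nonneg _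
  -- measurability of the weights
  have hgrm : ∀ r b : (Fin N → ℝ) → ℝ, Measurable r → Measurable b →
      Measurable (fun y => Dr C_r C_rr C_rb (r y) (b y) * r y) := by
    intro r b hrm hbm
    show Measurable fun y => C_r * Real.exp (-C_rr * r y + C_rb * b y) * r y
    exact ((((hrm.const_mul (-C_rr)).add (hbm.const_mul C_rb)).exp).const_mul C_r).mul hrm
  have hgbm : ∀ r b : (Fin N → ℝ) → ℝ, Measurable r → Measurable b →
      Measurable (fun y => Db C_b C_br C_bb (r y) (b y) * b y) := by
    intro r b hrm hbm
    show Measurable fun y => C_b * Real.exp (C_br * r y - C_bb * b y) * b y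
    exact ((((hrm.const_mul C_br).sub (hbm.const_mul C_bb)).exp).const_mul C_b).mul hbm
  -- pointwise bounds for the weights
  have hgr_pt : ∀ p q : ℝ, 0 ≤ p → 0 ≤ q → p + q ≤ 1 →
      |Dr C_r C_rr C_rb p q * p| ≤ C_r * Real.exp C_rb := by
    intro p q hp hq hpq
    show |C_r * Real.exp (-C_rr * p + C_rb * q) * p| ≤ C_r * Real.exp C_rb
    refine weight_bound hCr ?_ hp (by linarith)
    nlinarith [mul_nonneg hCrr.le hp, mul_le_mul_of_nonneg_left (show q ≤ 1 by linarith) hCrb.le]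
  have hgb_pt : ∀ p q : ℝ, 0 ≤ p → 0 ≤ q → p + q ≤ 1 →
      |Db C_b C_br C_bb p q * q| ≤ C_b * Real.exp C_br := by
    intro p q hp hq hpq
    show |C_b * Real.exp (C_br * p - C_bb * q) * q| ≤ C_b * Real.exp C_br
    refine weight_bound hCb ?_ hq (by linarith)
    nlinarith [mul_nonneg hCbb.le hq, mul_le_mul_of_nonneg_left (show p ≤ 1 by linarith) hCbr.le]
  have hf_pt : ∀ p q : ℝ, 0 ≤ p → 0 ≤ q → p + q ≤ 1 → |1 - (p + q)| ≤ 1 := by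
    intro p q hp hq hpq
    rw [abs_le]; constructor <;> linarith
  -- a.e. bounds
  have hfb : ∀ r b : (Fin N → ℝ) → ℝ, (r, b) ∈ MBar N →
      ∀ᵐ x ∂(volume : Measure (Fin N → ℝ)), |1 - (r x + b x)| ≤ 1 := by
    intro r b hmem
    obtain ⟨-, -, -, -, h1, h2, h3⟩ := hmem
    filter_upwards [h1, h2, h3] with x hx1 hx2 hx3
    exact hf_pt _ _ hx1 hx2 hx3
  have hgrb : ∀ r b : (Fin N → ℝ) → ℝ, (r, b) ∈ MBar N →
      ∀ᵐ x ∂(volume : Measure (Fin N → ℝ)),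
        |Dr C_r C_rr C_rb (r x) (b x) * r x| ≤ C_r * Real.exp C_rb := by
    intro r b hmem
    obtain ⟨-, -, -, -, h1, h2, h3⟩ := hmem
    filter_upwards [h1, h2, h3] with x hx1 hx2 hx3
    exact hgr_pt _ _ hx1 hx2 hx3
  have hgbb : ∀ r b : (Fin N → ℝ) → ℝ, (r, b) ∈ MBar N →
      ∀ᵐ x ∂(volume : Measure (Fin N → ℝ)),
        |Db C_b C_br C_bb (r x) (b x) * b x| ≤ C_b * Real.exp C_br := by
    intro r b hmem
    obtain ⟨-, -, -, -, h1, h2, h3⟩ := hmem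
    filter_upwards [h1, h2, h3] with x hx1 hx2 hx3
    exact hgb_pt _ _ hx1 hx2 hx3
  -- Part 1
  have part1 : ∀ r b : (Fin N → ℝ) → ℝ, (r, b) ∈ MBar N →
      (∫ x in unitBox N, Fr K₁ C_r C_rr C_rb r b x) = 0 ∧
      (∫ x in unitBox N, Fb K₁ C_b C_br C_bb r b x) = 0 := by
    intro r b hmem
    obtain ⟨hrm, hbm, hrp, hbp, hr0, hb0, hsum⟩ := hmem
    have hrp' : IsPeriodic r := hrp
    have hbp' : IsPeriodic b := hbp
    have hfm : Measurable fun x => 1 - (r x + b x) :=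
      measurable_const.sub (hrm.add hbm)
    have hfp : IsPeriodic fun x => 1 - (r x + b x) := by
      intro x m; simp only [hrp' x m, hbp' x m]
    constructor
    · have hgm := hgrm r b hrm hbm
      have hgp : IsPeriodic fun y => Dr C_r C_rr C_rb (r y) (b y) * r y := by
        intro x m; simp only [hrp' x m, hbp' x m]
      exact zero_mean hK hKeven hfm hgm hfp hgp zero_le_one (by positivity)
        (hfb r b ⟨hrm, hbm, hrp, hbp, hr0, hb0, hsum⟩)
        (hgrb r b ⟨hrm, hbm, hrp, hbp, hr0, hb0, hsum⟩)
    · have hgm := hgbm r b hrm hbm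
      have hgp : IsPeriodic fun y => Db C_b C_br C_bb (r y) (b y) * b y := by
        intro x m; simp only [hrp' x m, hbp' x m]
      exact zero_mean hK hKeven hfm hgm hfp hgp zero_le_one (by positivity)
        (hfb r b ⟨hrm, hbm, hrp, hbp, hr0, hb0, hsum⟩)
        (hgbb r b ⟨hrm, hbm, hrp, hbp, hr0, hb0, hsum⟩)
  refine ⟨part1, ?_⟩
  -- Part 2
  intro r b hmem hdr hdb t s
  have hrc : ∀ x, Continuous fun τ => r τ x := fun x =>
    continuous_iff_continuousAt.2 fun τ => (hdr τ x).continuousAt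
  have hbc : ∀ x, Continuous fun τ => b τ x := fun x =>
    continuous_iff_continuousAt.2 fun τ => (hdb τ x).continuousAt
  have hgood := good_set hmem hrc hbc
  set IK := ∫ z, |K₁ z| with hIKdef
  set CgR := C_r * Real.exp C_rb with hCgR
  set CgB := C_b * Real.exp C_br with hCgB
  have hCgR0 : 0 ≤ CgR := by positivity
  have hCgB0 : 0 ≤ CgB := by positivity
  -- mass of r is conserved
  have keyr : ∀ t₀ : ℝ, HasDerivAt (fun τ => ∫ x in unitBox N, r τ x) 0 t₀ := by
    intro t₀
    obtain ⟨hrm, hbm, hrp, hbp, hr0, hb0, hsum⟩ := hmem t₀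
    have hint : IntegrableOn (r t₀) (unitBox N) volume := by
      refine integrableOn_box hrm.aestronglyMeasurable (C := 1) ?_
      filter_upwards [hr0, hb0, hsum] with x h1 h2 h3
      rw [abs_le]; constructor <;> linarith
    have haesmF' : AEStronglyMeasurable (fun x => Fr K₁ C_r C_rr C_rb (r t₀) (b t₀) x)
        (volume.restrict (unitBox N)) := by
      have hc1 := conv_aesm hK (hgrm (r t₀) (b t₀) hrm hbm)
      have hc2 := conv_aesm hK (measurable_const.sub (hrm.add hbm) :
        Measurable fun y => 1 - (r t₀ y + b t₀ y))
      exact (((measurable_const.sub (hrm.add hbm)).aestronglyMeasurable.mul hc1).sub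
        (((hgrm (r t₀) (b t₀) hrm hbm).aestronglyMeasurable).mul hc2)).restrict
    have hbound : ∀ᵐ x ∂(volume.restrict (unitBox N)), ∀ τ ∈ Metric.ball t₀ 1,
        ‖Fr K₁ C_r C_rr C_rb (r τ) (b τ) x‖ ≤ 1 * (IK * CgR) + CgR * (IK * 1) := by
      refine ae_restrict_of_ae ?_
      filter_upwards [hgood] with x hx τ _
      obtain ⟨h1, h2, h3⟩ := hx τ
      have hcg : |conv K₁ (fun y => Dr C_r C_rr C_rb (r τ y) (b τ y) * r τ y) x| ≤ IK * CgR :=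
        conv_abs_le hK hCgR0 (hgrb (r τ) (b τ) (hmem τ)) x
      have hcf : |conv K₁ (fun y => 1 - (r τ y + b τ y)) x| ≤ IK * 1 :=
        conv_abs_le hK zero_le_one (hfb (r τ) (b τ) (hmem τ)) x
      have hgpt : |Dr C_r C_rr C_rb (r τ x) (b τ x) * r τ x| ≤ CgR := hgr_pt _ _ h1 h2 h3
      have hfpt : |1 - (r τ x + b τ x)| ≤ 1 := hf_pt _ _ h1 h2 h3
      rw [Real.norm_eq_abs, Fr]
      calc |(1 - (r τ x + b τ x)) * conv K₁ (fun y => Dr C_r C_rr C_rb (r τ y) (b τ y) * r τ y) x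
            - Dr C_r C_rr C_rb (r τ x) (b τ x) * r τ x
              * conv K₁ (fun y => 1 - (r τ y + b τ y)) x|
          ≤ |(1 - (r τ x + b τ x))
              * conv K₁ (fun y => Dr C_r C_rr C_rb (r τ y) (b τ y) * r τ y) x|
            + |Dr C_r C_rr C_rb (r τ x) (b τ x) * r τ x
              * conv K₁ (fun y => 1 - (r τ y + b τ y)) x| := abs_sub _ _
        _ ≤ 1 * (IK * CgR) + CgR * (IK * 1) := by
            rw [abs_mul, abs_mul]
            refine add_le_add (mul_le_mul hfpt hcg (abs_nonneg _) zero_le_one)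
              (mul_le_mul hgpt hcf (abs_nonneg _) hCgR0)
    have H := hasDerivAt_integral_of_dominated_loc_of_deriv_le
      (μ := volume.restrict (unitBox N)) (F := fun τ x => r τ x)
      (F' := fun τ x => Fr K₁ C_r C_rr C_rb (r τ) (b τ) x) (x₀ := t₀)
      (bound := fun _ => 1 * (IK * CgR) + CgR * (IK * 1)) (Metric.ball_mem_nhds t₀ one_pos)
      (Filter.Eventually.of_forall fun τ => ((hmem τ).1.aestronglyMeasurable.restrict))
      hint haesmF' hbound (integrable_const _)
      (Filter.Eventually.of_forall fun x τ _ => hdr τ x)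
    have h0 := (part1 (r t₀) (b t₀) (hmem t₀)).1
    rw [h0] at H
    exact H.2
  -- mass of b is conserved
  have keyb : ∀ t₀ : ℝ, HasDerivAt (fun τ => ∫ x in unitBox N, b τ x) 0 t₀ := by
    intro t₀
    obtain ⟨hrm, hbm, hrp, hbp, hr0, hb0, hsum⟩ := hmem t₀
    have hint : IntegrableOn (b t₀) (unitBox N) volume := by
      refine integrableOn_box hbm.aestronglyMeasurable (C := 1) ?_
      filter_upwards [hr0, hb0, hsum] with x h1 h2 h3
      rw [abs_le]; constructor <;> linarith
    have haesmF' : AEStronglyMeasurable (fun x => Fb K₁ C_b C_br C_bb (r t₀) (b t₀) x)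
        (volume.restrict (unitBox N)) := by
      have hc1 := conv_aesm hK (hgbm (r t₀) (b t₀) hrm hbm)
      have hc2 := conv_aesm hK (measurable_const.sub (hrm.add hbm) :
        Measurable fun y => 1 - (r t₀ y + b t₀ y))
      exact (((measurable_const.sub (hrm.add hbm)).aestronglyMeasurable.mul hc1).sub
        (((hgbm (r t₀) (b t₀) hrm hbm).aestronglyMeasurable).mul hc2)).restrict
    have hbound : ∀ᵐ x ∂(volume.restrict (unitBox N)), ∀ τ ∈ Metric.ball t₀ 1,
        ‖Fb K₁ C_b C_br C_bb (r τ) (b τ) x‖ ≤ 1 * (IK * CgB) + CgB * (IK * 1) := by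
      refine ae_restrict_of_ae ?_
      filter_upwards [hgood] with x hx τ _
      obtain ⟨h1, h2, h3⟩ := hx τ
      have hcg : |conv K₁ (fun y => Db C_b C_br C_bb (r τ y) (b τ y) * b τ y) x| ≤ IK * CgB :=
        conv_abs_le hK hCgB0 (hgbb (r τ) (b τ) (hmem τ)) x
      have hcf : |conv K₁ (fun y => 1 - (r τ y + b τ y)) x| ≤ IK * 1 :=
        conv_abs_le hK zero_le_one (hfb (r τ) (b τ) (hmem τ)) x
      have hgpt : |Db C_b C_br C_bb (r τ x) (b τ x) * b τ x| ≤ CgB := hgb_pt _ _ h1 h2 h3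
      have hfpt : |1 - (r τ x + b τ x)| ≤ 1 := hf_pt _ _ h1 h2 h3
      rw [Real.norm_eq_abs, Fb]
      calc |(1 - (r τ x + b τ x)) * conv K₁ (fun y => Db C_b C_br C_bb (r τ y) (b τ y) * b τ y) x
            - Db C_b C_br C_bb (r τ x) (b τ x) * b τ x
              * conv K₁ (fun y => 1 - (r τ y + b τ y)) x|
          ≤ |(1 - (r τ x + b τ x))
              * conv K₁ (fun y => Db C_b C_br C_bb (r τ y) (b τ y) * b τ y) x|
            + |Db C_b C_br C_bb (r τ x) (b τ x) * b τ x
              * conv K₁ (fun y => 1 - (r τ y + b τ y)) x| := abs_sub _ _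
        _ ≤ 1 * (IK * CgB) + CgB * (IK * 1) := by
            rw [abs_mul, abs_mul]
            refine add_le_add (mul_le_mul hfpt hcg (abs_nonneg _) zero_le_one)
              (mul_le_mul hgpt hcf (abs_nonneg _) hCgB0)
    have H := hasDerivAt_integral_of_dominated_loc_of_deriv_le
      (μ := volume.restrict (unitBox N)) (F := fun τ x => b τ x)
      (F' := fun τ x => Fb K₁ C_b C_br C_bb (r τ) (b τ) x) (x₀ := t₀)
      (bound := fun _ => 1 * (IK * CgB) + CgB * (IK * 1)) (Metric.ball_mem_nhds t₀ one_pos)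
      (Filter.Eventually.of_forall fun τ => ((hmem τ).2.1.aestronglyMeasurable.restrict))
      hint haesmF' hbound (integrable_const _)
      (Filter.Eventually.of_forall fun x τ _ => hdb τ x)
    have h0 := (part1 (r t₀) (b t₀) (hmem t₀)).2
    rw [h0] at H
    exact H.2
  constructor
  · exact is_const_of_deriv_eq_zero (fun τ => (keyr τ).differentiableAt)
      (fun τ => (keyr τ).deriv) t s
  · exact is_const_of_deriv_eq_zero (fun τ => (keyb τ).differentiableAt)
      (fun τ => (keyb τ).deriv) t s

end
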